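/- Let f be a monic polynomial of degree n minimizing I[f] = ∫_E |f(x)| dx over monic polynomials of degree n, where E = [-1,α] ∪ [β,1]. If f factors as f(x) = (x-ξ)(x-η)φ(x) with α < ξ ≤ η < β (two zeros, counted with multiplicity, in the open gap (α,β)), then f is not a minimizer; i.e., there exists a monic polynomial f₁ of degree n with I[f₁] < I[f]. -/

import Mathlib

open MeasureTheory Polynomial

/-- A minimizer of `I` cannot have two zeros (with multiplicity) in the gap `(α,β)`:
if `f = (x-ξ)(x-η)φ` with `α < ξ ≤ η < β`, there is a monic polynomial of the same
degree with strictly smaller `I`. -/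
theorem akhiezer_two_gap_zeros_not_minimal
    (α β : ℝ) (hα : -1 < α) (hαβ : α < β) (hβ : β < 1) (n : ℕ)
    (f φ : Polynomial ℝ) (ξ η : ℝ)
    (hf : f.Monic) (hdeg : f.natDegree = n)
    (hfact : f = (X - C ξ) * (X - C η) * φ)
    (hξ : α < ξ) (hξη : ξ ≤ η) (hη : η < β) :
    ∃ f₁ : Polynomial ℝ, f₁.Monic ∧ f₁.natDegree = n ∧
      (∫ x in (-1:ℝ)..α, |f₁.eval x|) + (∫ x in β..(1:ℝ), |f₁.eval x|) <
      (∫ x in (-1:ℝ)..α, |f.eval x|) + (∫ x in β..(1:ℝ), |f.eval x|) := by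
  have hφ0 : φ ≠ 0 := by
    intro h; rw [h, mul_zero] at hfact; exact hf.ne_zero hfact
  set h : ℝ := min ((ξ - α) * (η - α)) ((β - ξ) * (β - η)) with hh
  have hh0 : 0 < h := lt_min (mul_pos (by linarith) (by linarith))
    (mul_pos (by linarith) (by linarith))
  set f₁ : Polynomial ℝ := f - C h * φ with hf₁def
  -- degree facts
  have hdegφ : φ.natDegree < f.natDegree := by
    rw [hfact]
    have h1 : (X - C ξ : Polynomial ℝ) ≠ 0 := X_sub_C_ne_zero ξ
    have h2 : (X - C η : Polynomial ℝ) ≠ 0 := X_sub_C_ne_zero η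
    rw [natDegree_mul (mul_ne_zero h1 h2) hφ0, natDegree_mul h1 h2,
      natDegree_X_sub_C, natDegree_X_sub_C]
    omega
  have hdeg2 : (C h * φ).natDegree < f.natDegree :=
    lt_of_le_of_lt (natDegree_C_mul_le h φ) hdegφ
  have hmonic : f₁.Monic := hf.sub_of_left (degree_lt_degree hdeg2)
  have hnd : f₁.natDegree = n := by
    rw [hf₁def, natDegree_sub_eq_left_of_natDegree_lt hdeg2, hdeg]
  -- continuity / integrability
  have hcf : Continuous fun x : ℝ => |f.eval x| := f.continuous_aeval.abs
  have hcf₁ : Continuous fun x : ℝ => |f₁.eval x| := f₁.continuous_aeval.abs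
  have hcφ : Continuous fun x : ℝ => |φ.eval x| := φ.continuous_aeval.abs
  -- the key identity on intervals where (x-ξ)(x-η) ≥ h
  have key : ∀ a b : ℝ, a ≤ b → (∀ x ∈ Set.Icc a b, h ≤ (x - ξ) * (x - η)) →
      (∫ x in a..b, |f₁.eval x|)
        = (∫ x in a..b, |f.eval x|) - h * ∫ x in a..b, |φ.eval x| := by
    intro a b hab hq
    have heq : Set.EqOn (fun x => |f₁.eval x|)
        (fun x => |f.eval x| - h * |φ.eval x|) (Set.uIcc a b) := by
      intro x hx
      rw [Set.uIcc_of_le hab] at hx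
      have hqx := hq x hx
      have hfx : f.eval x = ((x - ξ) * (x - η)) * φ.eval x := by
        rw [hfact]; simp
      have hf1x : f₁.eval x = ((x - ξ) * (x - η) - h) * φ.eval x := by
        rw [hf₁def]; simp [hfx]; ring
      simp only [hfx, hf1x, abs_mul,
        abs_of_nonneg (by linarith : (0:ℝ) ≤ (x - ξ) * (x - η) - h),
        abs_of_nonneg (by linarith : (0:ℝ) ≤ (x - ξ) * (x - η))]
      ring
    rw [intervalIntegral.integral_congr heq,
      intervalIntegral.integral_sub (hcf.intervalIntegrable a b)
        ((hcφ.intervalIntegrable a b).const_mul h),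
      intervalIntegral.integral_const_mul]
  have hq1 : ∀ x ∈ Set.Icc (-1:ℝ) α, h ≤ (x - ξ) * (x - η) := by
    rintro x ⟨hx1, hx2⟩
    have h1 : h ≤ (ξ - α) * (η - α) := min_le_left _ _
    nlinarith [mul_nonneg (by linarith : (0:ℝ) ≤ ξ - x) (by linarith : (0:ℝ) ≤ η - x)]
  have hq2 : ∀ x ∈ Set.Icc (β:ℝ) 1, h ≤ (x - ξ) * (x - η) := by
    rintro x ⟨hx1, hx2⟩
    have h1 : h ≤ (β - ξ) * (β - η) := min_le_right _ _
    nlinarith [mul_nonneg (by linarith : (0:ℝ) ≤ x - ξ) (by linarith : (0:ℝ) ≤ x - η)]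
  have e1 := key (-1) α (by linarith) hq1
  have e2 := key β 1 (by linarith) hq2
  -- positivity of ∫ |φ| over [-1, α]
  have hpos : 0 < ∫ x in (-1:ℝ)..α, |φ.eval x| := by
    rw [intervalIntegral.integral_of_le hα.le]
    refine (setIntegral_pos_iff_support_of_nonneg_ae
      (Filter.Eventually.of_forall fun x => abs_nonneg _)
      (hcφ.integrableOn_Ioc)).2 ?_
    have hroots : Set.Finite {x : ℝ | φ.IsRoot x} := finite_setOf_isRoot hφ0
    have hsub : Set.Ioc (-1:ℝ) α \ {x : ℝ | φ.IsRoot x} ⊆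
        (Function.support fun x => |φ.eval x|) ∩ Set.Ioc (-1) α := by
      rintro x ⟨hx1, hx2⟩
      exact ⟨by simpa [Function.mem_support, abs_ne_zero] using hx2, hx1⟩
    calc (0:ENNReal) < volume (Set.Ioc (-1:ℝ) α) := by
          rw [Real.volume_Ioc]
          exact ENNReal.ofReal_pos.2 (by linarith)
      _ = volume (Set.Ioc (-1:ℝ) α \ {x : ℝ | φ.IsRoot x}) :=
          (measure_diff_null (hroots.measure_zero volume)).symm
      _ ≤ _ := measure_mono hsub
  have hnn : 0 ≤ ∫ x in β..(1:ℝ), |φ.eval x| :=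
    intervalIntegral.integral_nonneg (by linarith) fun x _ => abs_nonneg _
  refine ⟨f₁, hmonic, hnd, ?_⟩
  rw [e1, e2]
  nlinarith [mul_pos hh0 hpos, mul_nonneg hh0.le hnn]
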